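/- Let p be a pure quaternion with p² = −1, let α, β ∈ ℝ, let ε = ±1, and let f(x) = (cos α + (sin α)·p)·x·(cos β + ε·(sin β)·p) (the degenerate case q = ±p of a rotation of E⁴). Then the plane Λ₁ = Span{1, p} is invariant under f (in particular f(1) ∈ Span{1,p} and f(p) ∈ Span{1,p}), and the orthogonal plane Λ₂ = {x ∈ ℍ : Re x = 0 and ⟪x, p⟫ = 0} is also invariant under f: if Re x = 0 and ⟪x,p⟫ = 0, then Re f(x) = 0 and ⟪f(x), p⟫ = 0. -/

import Mathlib

open Quaternion
open scoped InnerProductSpace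

set_option maxHeartbeats 1000000 in
/-- Let `p` be a pure quaternion with `p² = -1`, `α β : ℝ`, `ε = ±1`, and
`f x = (cos α + (sin α) p) * x * (cos β + ε (sin β) p)` (the degenerate case `q = ±p`).
Then the plane `Λ₁ = Span{1, p}` is invariant under `f` (in particular
`f 1, f p ∈ Span{1, p}`), and the orthogonal plane
`Λ₂ = {x : Re x = 0 ∧ ⟪x, p⟫ = 0}` is also invariant under `f`. -/
theorem degenerate_rotation_invariant_planes (p : ℍ[ℝ]) (hp : p.re = 0)
    (hp2 : p ^ 2 = -1) (α β ε : ℝ) (hε : ε = 1 ∨ ε = -1) (f : ℍ[ℝ] → ℍ[ℝ])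
    (hf : ∀ x, f x = ((Real.cos α : ℍ[ℝ]) + (Real.sin α : ℍ[ℝ]) * p) * x *
        ((Real.cos β : ℍ[ℝ]) + (ε : ℍ[ℝ]) * (Real.sin β : ℍ[ℝ]) * p)) :
    f 1 ∈ Submodule.span ℝ ({1, p} : Set ℍ[ℝ]) ∧
    f p ∈ Submodule.span ℝ ({1, p} : Set ℍ[ℝ]) ∧
    (∀ x ∈ Submodule.span ℝ ({1, p} : Set ℍ[ℝ]),
      f x ∈ Submodule.span ℝ ({1, p} : Set ℍ[ℝ])) ∧
    (∀ x : ℍ[ℝ], x.re = 0 → ⟪x, p⟫_ℝ = 0 → (f x).re = 0 ∧ ⟪f x, p⟫_ℝ = 0) := by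
  set c := Real.cos α
  set s := Real.sin α
  set c' := Real.cos β
  set s' := Real.sin β
  have hpp : p * p = -1 := by rw [← pow_two]; exact hp2
  have hsp : star p = -p := Quaternion.star_eq_neg.2 hp
  -- general expansion
  have hexp : ∀ x : ℍ[ℝ], f x = (c * c') • x + (c * (ε * s')) • (x * p)
      + (s * c') • (p * x) + (s * (ε * s')) • (p * x * p) := by
    intro x
    rw [hf]
    simp only [add_mul, mul_add, Quaternion.coe_mul_eq_smul, Quaternion.mul_coe_eq_smul,
      smul_mul_assoc, mul_smul_comm, smul_smul, smul_add, mul_assoc]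
    module
  have h1mem : (1 : ℍ[ℝ]) ∈ Submodule.span ℝ ({1, p} : Set ℍ[ℝ]) :=
    Submodule.subset_span (by simp)
  have hpmem : p ∈ Submodule.span ℝ ({1, p} : Set ℍ[ℝ]) :=
    Submodule.subset_span (by simp)
  have hnegmem : (-1 : ℍ[ℝ]) ∈ Submodule.span ℝ ({1, p} : Set ℍ[ℝ]) :=
    Submodule.neg_mem _ h1mem
  have hf1 : f 1 ∈ Submodule.span ℝ ({1, p} : Set ℍ[ℝ]) := by
    rw [hexp]
    simp only [one_mul, mul_one, hpp]
    exact Submodule.add_mem _ (Submodule.add_mem _ (Submodule.add_mem _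
      (Submodule.smul_mem _ _ h1mem) (Submodule.smul_mem _ _ hpmem))
      (Submodule.smul_mem _ _ hpmem)) (Submodule.smul_mem _ _ hnegmem)
  have hfp : f p ∈ Submodule.span ℝ ({1, p} : Set ℍ[ℝ]) := by
    rw [hexp]
    have hppp : p * p * p = -p := by rw [hpp, neg_one_mul]
    simp only [hpp, hppp, neg_one_mul]
    exact Submodule.add_mem _ (Submodule.add_mem _ (Submodule.add_mem _
      (Submodule.smul_mem _ _ hpmem) (Submodule.smul_mem _ _ hnegmem))
      (Submodule.smul_mem _ _ hnegmem)) (Submodule.smul_mem _ _ (Submodule.neg_mem _ hpmem))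
  refine ⟨hf1, hfp, ?_, ?_⟩
  · intro x hx
    obtain ⟨a, b, hab⟩ := Submodule.mem_span_pair.1 hx
    have : f x = a • f 1 + b • f p := by
      rw [← hab, hf, hf, hf]
      simp only [mul_add, add_mul, smul_mul_assoc, mul_smul_comm, mul_one]
      module
    rw [this]
    exact Submodule.add_mem _ (Submodule.smul_mem _ _ hf1) (Submodule.smul_mem _ _ hfp)
  · intro x hx hxp
    have hxpre : (x * p).re = 0 := by
      have := hxp
      rw [Quaternion.inner_def, hsp, mul_neg, re_neg, neg_eq_zero] at this
      exact this
    have hanti : p * x = -(x * p) := by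
      have h0 := hxpre
      rw [Quaternion.re_mul] at h0
      ext <;> simp [Quaternion.re_mul, Quaternion.imI_mul, Quaternion.imJ_mul,
        Quaternion.imK_mul, hp, hx] <;>
        first
          | ring1
          | linear_combination 2 * h0 - 2 * p.re * hx
          | linear_combination 2 * p.re * hx - 2 * h0
          | linear_combination h0 - p.re * hx
          | linear_combination p.re * hx - h0
    have hpxp : p * x * p = x := by
      rw [hanti, neg_mul, mul_assoc, hpp]; simp
    have hfx : f x = (c * c' + s * (ε * s')) • x + (s * c' - c * (ε * s')) • (p * x) := by
      rw [hexp, hpxp, hanti]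
      module
    have hpxre : (p * x).re = 0 := by
      rw [hanti]; simp [hxpre]
    constructor
    · rw [hfx]
      simp [hx, hpxre]
    · have hfxp : f x * p = (c * c' + s * (ε * s')) • (x * p)
          + (s * c' - c * (ε * s')) • x := by
        rw [hfx, add_mul, smul_mul_assoc, smul_mul_assoc, hpxp]
      rw [Quaternion.inner_def, hsp, mul_neg, re_neg, hfxp]
      simp [hxpre, hx]
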